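/- For every complex number z, the limit as α → ∞ of the normalized spherical Bessel function j_α(√α · z) equals e^{-z²/4}. -/

import Mathlib

/-- The normalized spherical Bessel function
`j_α(z) = Γ(α+1) · Σ_{n≥0} (-1)^n (z/2)^{2n} / (n! Γ(n+α+1))`. -/
noncomputable def jBessel (α : ℝ) (z : ℂ) : ℂ :=
  Complex.Gamma (α + 1) *
    ∑' n : ℕ, ((-1) ^ n * (z / 2) ^ (2 * n)) / ((n.factorial : ℂ) * Complex.Gamma (n + α + 1))

open Filter Finset

lemma gamma_ratio (α : ℝ) (hα : 0 < α) (n : ℕ) :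
    Complex.Gamma ((n : ℂ) + α + 1) =
      Complex.Gamma (α + 1) * ∏ k ∈ range n, ((α : ℂ) + k + 1) := by
  induction n with
  | zero => simp
  | succ n ih =>
    have hne : ((n : ℂ) + α + 1) ≠ 0 := by
      intro h
      have := congrArg Complex.re h
      simp [Complex.add_re] at this
      nlinarith [Nat.cast_nonneg (α := ℝ) n]
    have : ((n + 1 : ℕ) : ℂ) + α + 1 = ((n : ℂ) + α + 1) + 1 := by push_cast; ring
    rw [this, Complex.Gamma_add_one _ hne, ih, prod_range_succ]
    ring

lemma ratio_tendsto (k : ℕ) :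
    Tendsto (fun α : ℝ => (α : ℂ) / ((α : ℂ) + k + 1)) atTop (nhds 1) := by
  have h : Tendsto (fun α : ℝ => α / (α + (k + 1 : ℝ))) atTop (nhds 1) := by
    have h1 : Tendsto (fun α : ℝ => (k + 1 : ℝ) / (α + (k + 1 : ℝ))) atTop (nhds 0) :=
      Tendsto.div_atTop tendsto_const_nhds (tendsto_atTop_add_const_right _ _ tendsto_id)
    have h2 : Tendsto (fun α : ℝ => 1 - (k + 1 : ℝ) / (α + (k + 1 : ℝ))) atTop (nhds 1) := by
      simpa using tendsto_const_nhds.sub h1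
    refine h2.congr' ?_
    filter_upwards [eventually_gt_atTop 0] with α hα
    have hne : α + (k + 1 : ℝ) ≠ 0 := by positivity
    field_simp
    ring
  have := (Complex.continuous_ofReal.tendsto 1).comp h
  simp only [Function.comp_def, Complex.ofReal_div, Complex.ofReal_add, Complex.ofReal_natCast,
    Complex.ofReal_one, ← add_assoc] at this
  exact this

theorem limit_jBessel (z : ℂ) :
    Filter.Tendsto (fun α : ℝ => jBessel α ((Real.sqrt α : ℂ) * z)) Filter.atTop
      (nhds (Complex.exp (-z ^ 2 / 4))) := by
  set g : ℝ → ℕ → ℂ := fun α n =>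
    ((-1) ^ n * (z / 2) ^ (2 * n) / (n.factorial : ℂ)) *
      ∏ k ∈ range n, ((α : ℂ) / ((α : ℂ) + k + 1)) with hg
  have hsum : Summable (fun n : ℕ => ((‖z‖ / 2) ^ 2) ^ n / n.factorial) :=
    Real.summable_pow_div_factorial _
  have hlim : ∀ n : ℕ, Tendsto (fun α : ℝ => g α n) atTop
      (nhds ((-1) ^ n * (z / 2) ^ (2 * n) / (n.factorial : ℂ))) := by
    intro n
    have hp : Tendsto (fun α : ℝ => ∏ k ∈ range n, ((α : ℂ) / ((α : ℂ) + k + 1))) atTop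
        (nhds (∏ _k ∈ range n, (1 : ℂ))) :=
      tendsto_finset_prod _ (fun k _ => ratio_tendsto k)
    have := (tendsto_const_nhds
      (x := ((-1 : ℂ)) ^ n * (z / 2) ^ (2 * n) / (n.factorial : ℂ))).mul hp
    simpa only [hg, Finset.prod_const_one, mul_one] using this
  have hbd : ∀ᶠ α : ℝ in atTop, ∀ n : ℕ, ‖g α n‖ ≤ ((‖z‖ / 2) ^ 2) ^ n / n.factorial := by
    filter_upwards [eventually_gt_atTop (0 : ℝ)] with α hα n
    have hprod : ‖∏ k ∈ range n, ((α : ℂ) / ((α : ℂ) + k + 1))‖ ≤ 1 := by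
      rw [norm_prod]
      apply Finset.prod_le_one (fun k _ => norm_nonneg _)
      intro k _
      have hcast : ((α : ℂ) / ((α : ℂ) + k + 1)) = ((α / (α + k + 1) : ℝ) : ℂ) := by
        push_cast; ring
      rw [hcast, Complex.norm_real, Real.norm_eq_abs, abs_div]
      have h1 : (0:ℝ) < α + k + 1 := by positivity
      rw [abs_of_pos hα, abs_of_pos h1]
      rw [div_le_one h1]
      have : (0:ℝ) ≤ (k:ℝ) + 1 := by positivity
      linarith
    have hnorm : ‖((-1 : ℂ)) ^ n * (z / 2) ^ (2 * n) / (n.factorial : ℂ)‖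
        = ((‖z‖ / 2) ^ 2) ^ n / n.factorial := by
      rw [norm_div, norm_mul, norm_pow, norm_pow, norm_neg, norm_one, one_pow, one_mul,
        norm_div, Complex.norm_natCast]
      rw [← pow_mul, mul_comm 2 n]
      norm_num
    calc ‖g α n‖ = ‖((-1 : ℂ)) ^ n * (z / 2) ^ (2 * n) / (n.factorial : ℂ)‖ *
          ‖∏ k ∈ range n, ((α : ℂ) / ((α : ℂ) + k + 1))‖ := norm_mul _ _
      _ ≤ ((‖z‖ / 2) ^ 2) ^ n / n.factorial * 1 := by
          apply mul_le_mul (le_of_eq hnorm) hprod (norm_nonneg _)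
          positivity
      _ = ((‖z‖ / 2) ^ 2) ^ n / n.factorial := mul_one _
  have key : Tendsto (fun α : ℝ => ∑' n, g α n) atTop
      (nhds (∑' n : ℕ, (-1) ^ n * (z / 2) ^ (2 * n) / (n.factorial : ℂ))) :=
    tendsto_tsum_of_dominated_convergence hsum hlim hbd
  have hval : (∑' n : ℕ, (-1) ^ n * (z / 2) ^ (2 * n) / (n.factorial : ℂ))
      = Complex.exp (-z ^ 2 / 4) := by
    rw [Complex.exp_eq_exp_ℂ, NormedSpace.exp_eq_tsum ℂ]
    apply tsum_congr
    intro n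
    rw [smul_eq_mul]
    have : (z / 2) ^ (2 * n) = (z ^ 2 / 4) ^ n := by
      rw [pow_mul]; congr 1; ring
    rw [this]
    have : ((-1 : ℂ)) ^ n * (z ^ 2 / 4) ^ n = (-z ^ 2 / 4) ^ n := by
      rw [← neg_pow]; congr 1; ring
    rw [this]; ring
  rw [← hval]
  refine key.congr' ?_
  filter_upwards [eventually_gt_atTop (0 : ℝ)] with α hα
  have hΓne : Complex.Gamma ((α : ℂ) + 1) ≠ 0 := by
    apply Complex.Gamma_ne_zero
    intro m
    intro h
    have := congrArg Complex.re h
    simp [Complex.add_re] at this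
    nlinarith [Nat.cast_nonneg (α := ℝ) m]
  rw [jBessel, ← tsum_mul_left]
  apply tsum_congr
  intro n
  have hPne : ∀ k ∈ range n, ((α : ℂ) + k + 1) ≠ 0 := by
    intro k _ h
    have := congrArg Complex.re h
    simp [Complex.add_re] at this
    nlinarith [Nat.cast_nonneg (α := ℝ) k]
  have hP : (∏ k ∈ range n, ((α : ℂ) + k + 1)) ≠ 0 := Finset.prod_ne_zero_iff.mpr hPne
  have hpow : (((Real.sqrt α : ℂ)) * z / 2) ^ (2 * n) = (α : ℂ) ^ n * (z / 2) ^ (2 * n) := by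
    have hs : ((Real.sqrt α : ℂ)) ^ 2 = (α : ℂ) := by
      rw [← Complex.ofReal_pow, Real.sq_sqrt hα.le]
    calc (((Real.sqrt α : ℂ)) * z / 2) ^ (2 * n)
        = (((Real.sqrt α : ℂ)) ^ 2) ^ n * (z / 2) ^ (2 * n) := by
          rw [pow_mul, pow_mul, ← mul_pow]; congr 1; ring
      _ = (α : ℂ) ^ n * (z / 2) ^ (2 * n) := by rw [hs]
  rw [hg]
  simp only []
  rw [gamma_ratio α hα n, hpow]
  have hprod_eq : (∏ k ∈ range n, ((α : ℂ) / ((α : ℂ) + k + 1)))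
      = (α : ℂ) ^ n / ∏ k ∈ range n, ((α : ℂ) + k + 1) := by
    rw [Finset.prod_div_distrib, Finset.prod_const, Finset.card_range]
  rw [hprod_eq]
  have hfac : ((n.factorial : ℂ)) ≠ 0 := Nat.cast_ne_zero.mpr n.factorial_ne_zero
  field_simp
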